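/- With the notation A_α = C̃ + α1ᵀ + 1αᵀ invertible, v(α) = 1/(1ᵀA_α⁻¹1), C_α = A_α − v(α)11ᵀ, a = Σαᵢ, c = 1ᵀC̃1, the gradient satisfies (1/4)∇‖C_α‖_F² = Mα + [M²v(α)² − c·v(α) − 2Ma·v(α)]·A_α⁻¹1 + C̃1 + [a − M·v(α)]·1. -/

import Mathlib

set_option maxHeartbeats 1000000


open Matrix BigOperators

/-- `A_α = C̃ + α1ᵀ + 1αᵀ`. -/
noncomputable def Amat {M : ℕ} (Ct : Matrix (Fin M) (Fin M) ℝ) (α : Fin M → ℝ) :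
    Matrix (Fin M) (Fin M) ℝ :=
  Ct + vecMulVec α (1 : Fin M → ℝ) + vecMulVec (1 : Fin M → ℝ) α

/-- `v(α) = 1/(1ᵀ A_α⁻¹ 1)`. -/
noncomputable def vfun {M : ℕ} (Ct : Matrix (Fin M) (Fin M) ℝ) (α : Fin M → ℝ) : ℝ :=
  1 / ((1 : Fin M → ℝ) ⬝ᵥ ((Amat Ct α)⁻¹ *ᵥ (1 : Fin M → ℝ)))

/-- `C_α = A_α − v(α)·11ᵀ`. -/
noncomputable def Cmat {M : ℕ} (Ct : Matrix (Fin M) (Fin M) ℝ) (α : Fin M → ℝ) :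
    Matrix (Fin M) (Fin M) ℝ :=
  Amat Ct α - vfun Ct α • vecMulVec (1 : Fin M → ℝ) (1 : Fin M → ℝ)

/-- Squared Frobenius norm `‖X‖_F² = Σᵢⱼ Xᵢⱼ²`. -/
noncomputable def frobSq {M : ℕ} (X : Matrix (Fin M) (Fin M) ℝ) : ℝ :=
  ∑ i, ∑ j, (X i j) ^ 2

open Matrix BigOperators

variable {n : Type*} [Fintype n] [DecidableEq n]

lemma mul_vv (X : Matrix n n ℝ) (a b : n → ℝ) :
    X * vecMulVec a b = vecMulVec (X *ᵥ a) b := by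
  ext j k
  simp [Matrix.mul_apply, vecMulVec_apply, Matrix.mulVec, dotProduct, Finset.sum_mul, mul_assoc]

lemma vv_mul (a b : n → ℝ) (X : Matrix n n ℝ) :
    vecMulVec a b * X = vecMulVec a (Xᵀ *ᵥ b) := by
  ext j k
  simp only [Matrix.mul_apply, vecMulVec_apply, Matrix.mulVec, dotProduct, Matrix.transpose_apply,
    Finset.mul_sum]
  exact Finset.sum_congr rfl fun m _ => by ring

lemma vv_mulVec (a b x : n → ℝ) : vecMulVec a b *ᵥ x = (b ⬝ᵥ x) • a := by
  ext j
  simp only [Matrix.mulVec, dotProduct, vecMulVec_apply, Pi.smul_apply, smul_eq_mul,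
    Finset.sum_mul, Finset.mul_sum]
  exact Finset.sum_congr rfl fun m _ => by ring

lemma Amat_update {M : ℕ} (Ct : Matrix (Fin M) (Fin M) ℝ) (α : Fin M → ℝ) (i : Fin M) (t : ℝ) :
    Amat Ct (Function.update α i t) =
      Amat Ct α + (t - α i) •
        (vecMulVec (Pi.single i 1) 1 + vecMulVec 1 (Pi.single i 1)) := by
  ext j k
  simp only [Amat, Matrix.add_apply, vecMulVec_apply, Pi.one_apply, Matrix.smul_apply,
    Pi.add_apply, smul_eq_mul, Function.update_apply, Pi.single_apply]
  by_cases hj : j = i <;> by_cases hk : k = i <;> simp [hj, hk] <;> ring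
lemma vv_mul_vv (a b c d : n → ℝ) :
    vecMulVec a b * vecMulVec c d = (b ⬝ᵥ c) • vecMulVec a d := by
  rw [mul_vv, vv_mulVec]
  ext j k; simp [vecMulVec_apply]; ring
lemma vfun_update {M : ℕ} (Ct : Matrix (Fin M) (Fin M) ℝ) (hsym : Ct.IsSymm) (α : Fin M → ℝ)
    (h : IsUnit (Amat Ct α).det) (i : Fin M) (t : ℝ)
    (hD : ((1 + (t - α i) * ((Amat Ct α)⁻¹ *ᵥ (1 : Fin M → ℝ)) i) ^ 2
        - (t - α i) ^ 2 * (Amat Ct α)⁻¹ i i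
          * ((1 : Fin M → ℝ) ⬝ᵥ ((Amat Ct α)⁻¹ *ᵥ (1 : Fin M → ℝ)))) ≠ 0) :
    vfun Ct (Function.update α i t)
      = ((1 + (t - α i) * ((Amat Ct α)⁻¹ *ᵥ (1 : Fin M → ℝ)) i) ^ 2
        - (t - α i) ^ 2 * (Amat Ct α)⁻¹ i i
          * ((1 : Fin M → ℝ) ⬝ᵥ ((Amat Ct α)⁻¹ *ᵥ (1 : Fin M → ℝ))))
        * vfun Ct α := by
  set A := Amat Ct α with hA
  set B := A⁻¹ with hB
  set u : Fin M → ℝ := B *ᵥ 1 with hu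
  set w : Fin M → ℝ := B *ᵥ Pi.single i 1 with hw
  set s : ℝ := (1 : Fin M → ℝ) ⬝ᵥ u with hs
  set ε : ℝ := t - α i with hε
  set D : ℝ := (1 + ε * u i) ^ 2 - ε ^ 2 * B i i * s with hDdef
  -- symmetry of A and B
  have hAsym : Aᵀ = A := by
    rw [hA]; unfold Amat
    rw [Matrix.transpose_add, Matrix.transpose_add]
    have h1 : (vecMulVec α (1 : Fin M → ℝ))ᵀ = vecMulVec (1 : Fin M → ℝ) α := by
      ext j k; simp [vecMulVec_apply, mul_comm]
    have h2 : (vecMulVec (1 : Fin M → ℝ) α)ᵀ = vecMulVec α (1 : Fin M → ℝ) := by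
      ext j k; simp [vecMulVec_apply, mul_comm]
    rw [h1, h2, hsym.eq]; abel
  have hBsym : Bᵀ = B := by
    rw [hB, Matrix.transpose_nonsing_inv, hAsym]
  -- basic identities
  have hAB : A * B = 1 := Matrix.mul_nonsing_inv A h
  have hAu : A *ᵥ u = 1 := by rw [hu, Matrix.mulVec_mulVec, hAB, Matrix.one_mulVec]
  have hAw : A *ᵥ w = Pi.single i 1 := by rw [hw, Matrix.mulVec_mulVec, hAB, Matrix.one_mulVec]
  have hwi : w i = B i i := by simp [hw, Matrix.mulVec_single, mul_one]
  have hvmB : (1 : Fin M → ℝ) ᵥ* B = u := by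
    rw [← hBsym, Matrix.vecMul_transpose]
  have hvmBe : Pi.single i (1:ℝ) ᵥ* B = w := by
    rw [← hBsym, Matrix.vecMul_transpose]
  have h1w : (1 : Fin M → ℝ) ⬝ᵥ w = u i := by
    rw [hw, Matrix.dotProduct_mulVec, hvmB, dotProduct_single_one]
  have h1u : (1 : Fin M → ℝ) ⬝ᵥ u = s := hs.symm
  have hew : Pi.single i (1:ℝ) ⬝ᵥ w = B i i := by rw [single_dotProduct, one_mul, hwi]
  have heu : Pi.single i (1:ℝ) ⬝ᵥ u = u i := by rw [single_dotProduct, one_mul]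
  -- the explicit inverse
  set r : Fin M → ℝ := (ε ^ 2 * s / D) • w + (-(ε * (ε * u i + 1)) / D) • u with hr
  set q : Fin M → ℝ := (-(ε * (ε * u i + 1)) / D) • w + (ε ^ 2 * B i i / D) • u with hq
  set N : Matrix (Fin M) (Fin M) ℝ := B + vecMulVec w r + vecMulVec u q with hN
  have key : Amat Ct (Function.update α i t) * N = 1 := by
    rw [Amat_update Ct α i t, ← hA, ← hε, hN]
    rw [smul_add]
    simp only [Matrix.add_mul, Matrix.mul_add, Matrix.smul_mul, mul_vv, vv_mul, vv_mul_vv,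
      hAB, hAu, hAw, hBsym, hvmB, hvmBe, vv_mulVec, h1w, h1u, hew, heu]
    ext j k
    simp only [Matrix.add_apply, Matrix.smul_apply, vecMulVec_apply, hr, hq, Pi.add_apply,
      Pi.smul_apply, smul_eq_mul, Pi.one_apply, ← hu, ← hw]
    generalize (Pi.single i 1 : Fin M → ℝ) j = ej
    generalize (Pi.single i 1 : Fin M → ℝ) k = ek
    generalize (1 : Matrix (Fin M) (Fin M) ℝ) j k = o
    field_simp
    rw [hDdef]
    ring
  have hNA : (Amat Ct (Function.update α i t))⁻¹ = N := Matrix.inv_eq_right_inv key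
  have hw1 : w ⬝ᵥ (1 : Fin M → ℝ) = u i := (dotProduct_comm _ _).trans h1w
  have hu1 : u ⬝ᵥ (1 : Fin M → ℝ) = s := (dotProduct_comm _ _).trans h1u
  have hsum : (1 : Fin M → ℝ) ⬝ᵥ (N *ᵥ (1 : Fin M → ℝ)) = s / D := by
    rw [hN]
    simp only [Matrix.add_mulVec, vv_mulVec, dotProduct_add, dotProduct_smul, smul_eq_mul,
      h1w, h1u, hr, hq, add_dotProduct, smul_dotProduct, hw1, hu1, ← hu]
    field_simp
    rw [hDdef]
    ring
  have hveq : vfun Ct (Function.update α i t)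
      = 1 / ((1 : Fin M → ℝ) ⬝ᵥ (N *ᵥ (1 : Fin M → ℝ))) := by
    unfold vfun
    rw [hNA]
  have hv : vfun Ct α = 1 / s := rfl
  rw [hveq, hsum, one_div_div, hv, mul_one_div]
theorem grad_frobSq_Cmat {M : ℕ} (Ct : Matrix (Fin M) (Fin M) ℝ) (hsym : Ct.IsSymm)
    (α : Fin M → ℝ) (h : IsUnit (Amat Ct α).det) (i : Fin M) :
    deriv (fun t => frobSq (Cmat Ct (Function.update α i t))) (α i)
      = 4 * ((M : ℝ) * α i
          + ((M : ℝ) ^ 2 * (vfun Ct α) ^ 2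
              - ((1 : Fin M → ℝ) ⬝ᵥ (Ct *ᵥ (1 : Fin M → ℝ))) * vfun Ct α
              - 2 * (M : ℝ) * (∑ k, α k) * vfun Ct α)
              * ((Amat Ct α)⁻¹ *ᵥ (1 : Fin M → ℝ)) i
          + (Ct *ᵥ (1 : Fin M → ℝ)) i
          + ((∑ k, α k) - (M : ℝ) * vfun Ct α)) := by
  set B := (Amat Ct α)⁻¹ with hB
  set u : Fin M → ℝ := B *ᵥ 1 with hu
  set s : ℝ := (1 : Fin M → ℝ) ⬝ᵥ u with hs
  set v : ℝ := vfun Ct α with hv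
  set Df : ℝ → ℝ := fun t => (1 + (t - α i) * u i) ^ 2 - (t - α i) ^ 2 * B i i * s with hDf
  set g : ℝ → ℝ := fun t => ∑ j, ∑ k,
      (Ct j k + (if j = i then t else α j) + (if k = i then t else α k) - v * Df t) ^ 2 with hg
  -- Step 1: eventual equality
  have hDcont : Continuous Df := by
    rw [hDf]; fun_prop
  have hD1 : Df (α i) = 1 := by simp [hDf]
  have hne : ∀ᶠ t in nhds (α i), Df t ≠ 0 := by
    have ht : Filter.Tendsto Df (nhds (α i)) (nhds (Df (α i))) := hDcont.continuousAt
    rw [hD1] at ht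
    exact ht.eventually_ne one_ne_zero
  have hev : (fun t => frobSq (Cmat Ct (Function.update α i t))) =ᶠ[nhds (α i)] g := by
    filter_upwards [hne] with t ht
    have hvu : vfun Ct (Function.update α i t) = Df t * v := vfun_update Ct hsym α h i t ht
    simp only [hg, frobSq, Cmat, Amat, Matrix.sub_apply, Matrix.add_apply, vecMulVec_apply,
      Matrix.smul_apply, Pi.one_apply, smul_eq_mul, Function.update_apply, hvu]
    refine Finset.sum_congr rfl fun j _ => Finset.sum_congr rfl fun k _ => ?_
    ring
  -- Step 2: derivative of g
  have hDf' : HasDerivAt Df (2 * u i) (α i) := by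
    have h1 : HasDerivAt (fun t : ℝ => 1 + (t - α i) * u i) (u i) (α i) := by
      simpa using (((hasDerivAt_id (α i)).sub_const (α i)).mul_const (u i)).const_add 1
    have h2 : HasDerivAt (fun t : ℝ => (t - α i) ^ 2) 0 (α i) := by
      simpa using ((hasDerivAt_id (α i)).sub_const (α i)).fun_pow 2
    have := (h1.fun_pow 2).fun_sub ((h2.mul_const (B i i)).mul_const s)
    simpa using this
  have hbase : ∀ j k : Fin M, HasDerivAt
      (fun t => Ct j k + (if j = i then t else α j) + (if k = i then t else α k) - v * Df t)
      ((if j = i then (1:ℝ) else 0) + (if k = i then (1:ℝ) else 0) - v * (2 * u i)) (α i) := by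
    intro j k
    have hite : ∀ j : Fin M, HasDerivAt (fun t : ℝ => if j = i then t else α j)
        (if j = i then (1:ℝ) else 0) (α i) := by
      intro j
      by_cases hj : j = i
      · simpa [hj] using hasDerivAt_id' (α i)
      · simpa [hj] using hasDerivAt_const (α i) (α j)
    exact (((hite j).const_add (Ct j k)).add (hite k)).sub (hDf'.const_mul v)
  have hgderiv : HasDerivAt g (∑ j, ∑ k,
      (2 * (Ct j k + α j + α k - v) *
        ((if j = i then (1:ℝ) else 0) + (if k = i then (1:ℝ) else 0) - v * (2 * u i)))) (α i) := by
    rw [hg]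
    refine HasDerivAt.fun_sum fun j _ => HasDerivAt.fun_sum fun k _ => ?_
    have := (hbase j k).fun_pow 2
    have hval : (Ct j k + (if j = i then α i else α j) + (if k = i then α i else α k)
        - v * Df (α i)) = Ct j k + α j + α k - v := by
      rw [hD1]
      by_cases hj : j = i <;> by_cases hk : k = i <;> simp [hj, hk]
    rw [hval] at this
    convert this using 1
    · rfl
    ring
  -- Step 3: assemble
  rw [hev.deriv_eq, hgderiv.deriv]
  set a : ℝ := ∑ k, α k with ha
  have hrow : ∀ j, (Ct *ᵥ (1 : Fin M → ℝ)) j = ∑ k, Ct j k := by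
    intro j; simp [Matrix.mulVec, dotProduct]
  have hcol : ∀ k : Fin M, ∑ j, Ct j k = (Ct *ᵥ (1 : Fin M → ℝ)) k := by
    intro k
    rw [hrow]
    exact Finset.sum_congr rfl fun j _ => by rw [← hsym.apply j k]
  have hc : (1 : Fin M → ℝ) ⬝ᵥ (Ct *ᵥ (1 : Fin M → ℝ)) = ∑ j, ∑ k, Ct j k := by
    simp [dotProduct, hrow]
  have hsplit : ∀ j k : Fin M,
      2 * (Ct j k + α j + α k - v) *
        ((if j = i then (1:ℝ) else 0) + (if k = i then (1:ℝ) else 0) - v * (2 * u i))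
      = ((if j = i then 2 * (Ct j k + α j + α k - v) else 0)
        + (if k = i then 2 * (Ct j k + α j + α k - v) else 0))
        - (4 * v * u i) * (Ct j k + α j + α k - v) := by
    intro j k
    by_cases hj : j = i <;> by_cases hk : k = i <;> simp [hj, hk] <;> ring
  simp_rw [hsplit, Finset.sum_sub_distrib, Finset.sum_add_distrib, ← Finset.mul_sum,
    Finset.sum_ite_eq', Finset.mem_univ, if_true]
  have hpull : ∑ j : Fin M, ∑ k : Fin M, (if j = i then 2 * (Ct j k + α j + α k - v) else 0)
      = ∑ k : Fin M, 2 * (Ct i k + α i + α k - v) := by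
    rw [Finset.sum_comm]
    simp
  rw [hpull]
  have B1 : ∑ k : Fin M, 2 * (Ct i k + α i + α k - v)
      = 2 * ((Ct *ᵥ (1 : Fin M → ℝ)) i + (M : ℝ) * α i + a - (M : ℝ) * v) := by
    rw [← Finset.mul_sum]
    congr 1
    rw [Finset.sum_sub_distrib, Finset.sum_add_distrib, Finset.sum_add_distrib,
      Finset.sum_const, Finset.sum_const, Finset.card_univ, Fintype.card_fin, hrow i, ha]
    simp [nsmul_eq_mul]
  rw [B1]
  have B2 : ∑ j : Fin M, 2 * (Ct j i + α j + α i - v)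
      = 2 * ((Ct *ᵥ (1 : Fin M → ℝ)) i + a + (M : ℝ) * α i - (M : ℝ) * v) := by
    rw [← Finset.mul_sum]
    congr 1
    rw [Finset.sum_sub_distrib, Finset.sum_add_distrib, Finset.sum_add_distrib,
      Finset.sum_const, Finset.sum_const, Finset.card_univ, Fintype.card_fin, ha, ← hcol i]
    simp [nsmul_eq_mul]
  have hin : ∀ j, ∑ k : Fin M, (Ct j k + α j + α k - v)
      = (Ct *ᵥ (1 : Fin M → ℝ)) j + (M : ℝ) * α j + a - (M : ℝ) * v := by
    intro j
    rw [Finset.sum_sub_distrib, Finset.sum_add_distrib, Finset.sum_add_distrib,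
      Finset.sum_const, Finset.sum_const, Finset.card_univ, Fintype.card_fin, hrow j, ha]
    simp [nsmul_eq_mul]
  have B0 : ∑ j : Fin M, ∑ k : Fin M, (Ct j k + α j + α k - v)
      = ((1 : Fin M → ℝ) ⬝ᵥ (Ct *ᵥ (1 : Fin M → ℝ))) + (M : ℝ) * a + (M : ℝ) * a
        - (M : ℝ) * ((M : ℝ) * v) := by
    simp_rw [hin]
    rw [Finset.sum_sub_distrib, Finset.sum_add_distrib, Finset.sum_add_distrib,
      Finset.sum_const, Finset.sum_const, Finset.card_univ, Fintype.card_fin,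
      ← Finset.mul_sum, ← ha]
    have h1C : ∑ j, (Ct *ᵥ (1 : Fin M → ℝ)) j = (1 : Fin M → ℝ) ⬝ᵥ (Ct *ᵥ (1 : Fin M → ℝ)) := by
      simp [dotProduct]
    rw [h1C]
    simp [nsmul_eq_mul]
  rw [B2, B0]
  ring
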